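/- arXiv:2605.19140 — 3 statements merged into one kernel-verified Lean document; each statement's English description precedes it below -/
import Mathlib

section
/- One-step perturbation bound between AIS-induced and latent Bellman operators: let T₁ and T₂ be random-duration Bellman optimality operators built from rewards R₁, R₂ and kernels p₁, p₂ with the same γ and τmax. Suppose |R₁(s,a) − R₂(s,a)| ≤ ε for all (s,a), and let D := max_{(s,a)} Σ_{(s',τ)} |p₁(s,a)(s',τ) − p₂(s,a)(s',τ)|·γ^τ. Then for every Q : S×A → ℝ with ‖Q‖∞ ≤ M, one has ‖T₁ Q − T₂ Q‖∞ ≤ ε + M·D. -/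
open Finset

/-- A random-duration transition kernel: for each `(s, a)`, the weights
`p s a s' τ` over `S × {1,…,τmax}` are nonnegative and sum to one. -/
def IsKernel {S A : Type*} [Fintype S] (τmax : ℕ) (p : S → A → S → ℕ → ℝ) : Prop :=
  ∀ s a, (∀ s' τ, 0 ≤ p s a s' τ) ∧
    ∑ s' : S, ∑ τ ∈ Finset.Icc 1 τmax, p s a s' τ = 1

/-- The effective discount `γ̄ := max_{(s,a)} Σ_{(s',τ)} p(s,a)(s',τ) γ^τ`. -/
noncomputable def effDiscount {S A : Type*} [Fintype S] [Fintype A] [Nonempty S] [Nonempty A]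
    (γ : ℝ) (τmax : ℕ) (p : S → A → S → ℕ → ℝ) : ℝ :=
  Finset.univ.sup' Finset.univ_nonempty fun sa : S × A =>
    ∑ s' : S, ∑ τ ∈ Finset.Icc 1 τmax, p sa.1 sa.2 s' τ * γ ^ τ

/-- The sup norm `‖f‖∞ = max_{(s,a)} |f(s,a)|` on functions `S × A → ℝ`. -/
noncomputable def supNorm {S A : Type*} [Fintype S] [Fintype A] [Nonempty S] [Nonempty A]
    (f : S → A → ℝ) : ℝ :=
  Finset.univ.sup' Finset.univ_nonempty fun sa : S × A => |f sa.1 sa.2|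

/-- The random-duration Bellman optimality operator:
`(T Q)(s,a) = R(s,a) + Σ_{(s',τ)} p(s,a)(s',τ) γ^τ max_{a'} Q(s',a')`. -/
noncomputable def bellman {S A : Type*} [Fintype S] [Fintype A] [Nonempty A]
    (γ : ℝ) (τmax : ℕ) (p : S → A → S → ℕ → ℝ) (R : S → A → ℝ)
    (Q : S → A → ℝ) : S → A → ℝ :=
  fun s a => R s a + ∑ s' : S, ∑ τ ∈ Finset.Icc 1 τmax,
    p s a s' τ * γ ^ τ * Finset.univ.sup' Finset.univ_nonempty (Q s')

/-- The `γ`-weighted kernel discrepancy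
`D := max_{(s,a)} Σ_{(s',τ)} |p₁(s,a)(s',τ) − p₂(s,a)(s',τ)| γ^τ`. -/
noncomputable def kernelDiscrepancy {S A : Type*} [Fintype S] [Fintype A] [Nonempty S] [Nonempty A]
    (γ : ℝ) (τmax : ℕ) (p₁ p₂ : S → A → S → ℕ → ℝ) : ℝ :=
  Finset.univ.sup' Finset.univ_nonempty fun sa : S × A =>
    ∑ s' : S, ∑ τ ∈ Finset.Icc 1 τmax,
      |p₁ sa.1 sa.2 s' τ - p₂ sa.1 sa.2 s' τ| * γ ^ τ

/-- one-step perturbation bound between two random-duration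
Bellman operators: `‖T₁ Q − T₂ Q‖∞ ≤ ε + M D` whenever `‖Q‖∞ ≤ M`. -/
theorem bellman_perturbation {S A : Type*} [Fintype S] [Fintype A] [Nonempty S] [Nonempty A]
    (γ : ℝ) (hγ0 : 0 < γ) (hγ1 : γ < 1) (τmax : ℕ) (hτmax : 1 ≤ τmax)
    (p₁ p₂ : S → A → S → ℕ → ℝ) (hp₁ : IsKernel τmax p₁) (hp₂ : IsKernel τmax p₂)
    (R₁ R₂ : S → A → ℝ) (ε : ℝ) (hε : ∀ s a, |R₁ s a - R₂ s a| ≤ ε)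
    (M : ℝ) (Q : S → A → ℝ) (hQ : supNorm Q ≤ M) :
    supNorm (fun s a => bellman γ τmax p₁ R₁ Q s a - bellman γ τmax p₂ R₂ Q s a)
      ≤ ε + M * kernelDiscrepancy γ τmax p₁ p₂ := by
  have hQabs : ∀ s a, |Q s a| ≤ M := fun s a =>
    le_trans (Finset.le_sup' (fun sa : S × A => |Q sa.1 sa.2|) (Finset.mem_univ (s, a))) hQ
  have hM0 : 0 ≤ M := le_trans (abs_nonneg _) (hQabs (Classical.arbitrary S) (Classical.arbitrary A))
  have hV : ∀ s' : S, |Finset.univ.sup' Finset.univ_nonempty (Q s')| ≤ M := by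
    intro s'
    rw [abs_le]
    constructor
    · refine le_trans ?_ (Finset.le_sup' (Q s') (Finset.mem_univ (Classical.arbitrary A)))
      have := hQabs s' (Classical.arbitrary A)
      rw [abs_le] at this; linarith [this.1]
    · exact Finset.sup'_le _ _ fun a _ => le_trans (le_abs_self _) (hQabs s' a)
  apply Finset.sup'_le
  rintro ⟨s, a⟩ -
  simp only [bellman]
  set V : S → ℝ := fun s' => Finset.univ.sup' Finset.univ_nonempty (Q s') with hVdef
  have key : (R₁ s a + ∑ s' : S, ∑ τ ∈ Finset.Icc 1 τmax, p₁ s a s' τ * γ ^ τ * V s')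
      - (R₂ s a + ∑ s' : S, ∑ τ ∈ Finset.Icc 1 τmax, p₂ s a s' τ * γ ^ τ * V s')
      = (R₁ s a - R₂ s a)
      + ∑ s' : S, ∑ τ ∈ Finset.Icc 1 τmax, (p₁ s a s' τ - p₂ s a s' τ) * γ ^ τ * V s' := by
    have h : ∑ s' : S, ∑ τ ∈ Finset.Icc 1 τmax, (p₁ s a s' τ - p₂ s a s' τ) * γ ^ τ * V s'
        = ∑ s' : S, ∑ τ ∈ Finset.Icc 1 τmax, p₁ s a s' τ * γ ^ τ * V s'
          - ∑ s' : S, ∑ τ ∈ Finset.Icc 1 τmax, p₂ s a s' τ * γ ^ τ * V s' := by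
      rw [← Finset.sum_sub_distrib]
      refine Finset.sum_congr rfl fun s' _ => ?_
      rw [← Finset.sum_sub_distrib]
      exact Finset.sum_congr rfl fun τ _ => by ring
    rw [h]; ring
  rw [key]
  refine le_trans (abs_add_le _ _) (add_le_add (hε s a) ?_)
  have hsum : |∑ s' : S, ∑ τ ∈ Finset.Icc 1 τmax, (p₁ s a s' τ - p₂ s a s' τ) * γ ^ τ * V s'|
      ≤ ∑ s' : S, ∑ τ ∈ Finset.Icc 1 τmax, |p₁ s a s' τ - p₂ s a s' τ| * γ ^ τ * M := by
    refine le_trans (Finset.abs_sum_le_sum_abs _ _) (Finset.sum_le_sum fun s' _ => ?_)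
    refine le_trans (Finset.abs_sum_le_sum_abs _ _) (Finset.sum_le_sum fun τ _ => ?_)
    rw [abs_mul, abs_mul, abs_pow, abs_of_pos hγ0]
    exact mul_le_mul_of_nonneg_left (hV s')
      (mul_nonneg (abs_nonneg _) (pow_nonneg hγ0.le _))
  refine le_trans hsum ?_
  have : ∑ s' : S, ∑ τ ∈ Finset.Icc 1 τmax, |p₁ s a s' τ - p₂ s a s' τ| * γ ^ τ * M
      = M * ∑ s' : S, ∑ τ ∈ Finset.Icc 1 τmax, |p₁ s a s' τ - p₂ s a s' τ| * γ ^ τ := by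
    rw [Finset.mul_sum]
    exact Finset.sum_congr rfl fun s' _ => by rw [Finset.mul_sum]; exact Finset.sum_congr rfl fun τ _ => by ring
  rw [this]
  refine mul_le_mul_of_nonneg_left ?_ hM0
  exact Finset.le_sup' (fun sa : S × A => ∑ s' : S, ∑ τ ∈ Finset.Icc 1 τmax,
    |p₁ sa.1 sa.2 s' τ - p₂ sa.1 sa.2 s' τ| * γ ^ τ) (Finset.mem_univ (s, a))
end

section
/- AIS value-gap bound (finite instantiation of the paper's option-level AIS theorem): let T₁ and T₂ be random-duration Bellman optimality operators built from rewards R₁, R₂ and kernels p₁, p₂ (same γ and τmax), with unique fixed points Q₁* and Q₂*. Suppose |R₁(s,a) − R₂(s,a)| ≤ ε for all (s,a), let D := max_{(s,a)} Σ_{(s',τ)} |p₁(s,a)(s',τ) − p₂(s,a)(s',τ)|·γ^τ, let M := ‖Q₂*‖∞, and let γ̄₁ := max_{(s,a)} Σ_{(s',τ)} p₁(s,a)(s',τ)·γ^τ < 1. Then ‖Q₁* − Q₂*‖∞ ≤ (ε + M·D)/(1 − γ̄₁). -/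
open Finset

lemma sup'_abs_sub {A : Type*} (s : Finset A) (hs : s.Nonempty) (f g : A → ℝ) :
    |s.sup' hs f - s.sup' hs g| ≤ s.sup' hs fun a => |f a - g a| := by
  rw [abs_sub_le_iff]
  constructor
  · rw [sub_le_iff_le_add]
    apply Finset.sup'_le
    intro a ha
    have h1 : f a ≤ |f a - g a| + g a := by
      have := le_abs_self (f a - g a); linarith
    exact h1.trans (add_le_add (Finset.le_sup' (fun a => |f a - g a|) ha) (Finset.le_sup' _ ha))
  · rw [sub_le_iff_le_add]
    apply Finset.sup'_le
    intro a ha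
    have h1 : g a ≤ |f a - g a| + f a := by
      have := neg_abs_le (f a - g a); linarith
    exact h1.trans (add_le_add (Finset.le_sup' (fun a => |f a - g a|) ha) (Finset.le_sup' _ ha))

/-- AIS value-gap bound (finite instantiation):
`‖Q₁⋆ − Q₂⋆‖∞ ≤ (ε + M D)/(1 − γ̄₁)` where `M = ‖Q₂⋆‖∞`. -/
theorem ais_value_gap {S A : Type*} [Fintype S] [Fintype A] [Nonempty S] [Nonempty A]
    (γ : ℝ) (hγ0 : 0 < γ) (hγ1 : γ < 1) (τmax : ℕ) (hτmax : 1 ≤ τmax)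
    (p₁ p₂ : S → A → S → ℕ → ℝ) (hp₁ : IsKernel τmax p₁) (hp₂ : IsKernel τmax p₂)
    (R₁ R₂ : S → A → ℝ) (ε : ℝ) (hε : ∀ s a, |R₁ s a - R₂ s a| ≤ ε)
    (Qstar₁ : S → A → ℝ) (hfix₁ : bellman γ τmax p₁ R₁ Qstar₁ = Qstar₁)
    (Qstar₂ : S → A → ℝ) (hfix₂ : bellman γ τmax p₂ R₂ Qstar₂ = Qstar₂) :
    supNorm (fun s a => Qstar₁ s a - Qstar₂ s a)
      ≤ (ε + supNorm Qstar₂ * kernelDiscrepancy γ τmax p₁ p₂)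
          / (1 - effDiscount γ τmax p₁) := by
  classical
  set Δ : ℝ := supNorm (fun s a => Qstar₁ s a - Qstar₂ s a) with hΔdef
  set M : ℝ := supNorm Qstar₂ with hMdef
  set D : ℝ := kernelDiscrepancy γ τmax p₁ p₂ with hDdef
  set g : ℝ := effDiscount γ τmax p₁ with hgdef
  -- the optimal values
  set V₁ : S → ℝ := fun s' => Finset.univ.sup' Finset.univ_nonempty (Qstar₁ s') with hV₁
  set V₂ : S → ℝ := fun s' => Finset.univ.sup' Finset.univ_nonempty (Qstar₂ s') with hV₂
  obtain ⟨sa₀⟩ : Nonempty (S × A) := inferInstance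
  have hΔ0 : 0 ≤ Δ := by
    rw [hΔdef, supNorm]
    exact le_trans (abs_nonneg _)
      (Finset.le_sup' (fun sa : S × A => |Qstar₁ sa.1 sa.2 - Qstar₂ sa.1 sa.2|)
        (Finset.mem_univ sa₀))
  have hM0 : 0 ≤ M := by
    rw [hMdef, supNorm]
    exact le_trans (abs_nonneg _)
      (Finset.le_sup' (fun sa : S × A => |Qstar₂ sa.1 sa.2|) (Finset.mem_univ sa₀))
  -- g ≤ γ
  have hgγ : g ≤ γ := by
    rw [hgdef, effDiscount]
    apply Finset.sup'_le
    intro sa _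
    calc ∑ s' : S, ∑ τ ∈ Finset.Icc 1 τmax, p₁ sa.1 sa.2 s' τ * γ ^ τ
        ≤ ∑ s' : S, ∑ τ ∈ Finset.Icc 1 τmax, p₁ sa.1 sa.2 s' τ * γ := by
          refine Finset.sum_le_sum fun s' _ => Finset.sum_le_sum fun τ hτ => ?_
          have hτ1 : 1 ≤ τ := (Finset.mem_Icc.mp hτ).1
          have : γ ^ τ ≤ γ ^ 1 := pow_le_pow_of_le_one hγ0.le hγ1.le hτ1
          rw [pow_one] at this
          exact mul_le_mul_of_nonneg_left this ((hp₁ sa.1 sa.2).1 s' τ)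
      _ = (∑ s' : S, ∑ τ ∈ Finset.Icc 1 τmax, p₁ sa.1 sa.2 s' τ) * γ := by
          rw [Finset.sum_mul]; exact Finset.sum_congr rfl fun s' _ => (Finset.sum_mul ..).symm
      _ = γ := by rw [(hp₁ sa.1 sa.2).2, one_mul]
  have h1g : 0 < 1 - g := by linarith
  -- bounds on V
  have hVd : ∀ s', |V₁ s' - V₂ s'| ≤ Δ := by
    intro s'
    rw [hΔdef, supNorm]
    refine le_trans (sup'_abs_sub _ _ _ _) (Finset.sup'_le _ _ fun a _ => ?_)
    exact Finset.le_sup' (f := fun sa : S × A => |Qstar₁ sa.1 sa.2 - Qstar₂ sa.1 sa.2|)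
      (Finset.mem_univ (s', a))
  have hV2 : ∀ s', |V₂ s'| ≤ M := by
    intro s'
    rw [hMdef, supNorm, abs_le]
    constructor
    · obtain ⟨a⟩ : Nonempty A := inferInstance
      have h0 : |Qstar₂ s' a|
          ≤ Finset.univ.sup' Finset.univ_nonempty (fun sa : S × A => |Qstar₂ sa.1 sa.2|) :=
        Finset.le_sup' (fun sa : S × A => |Qstar₂ sa.1 sa.2|) (Finset.mem_univ (s', a))
      have h1 : -(Finset.univ.sup' Finset.univ_nonempty (fun sa : S × A => |Qstar₂ sa.1 sa.2|))
          ≤ Qstar₂ s' a := by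
        have := neg_abs_le (Qstar₂ s' a); linarith
      exact h1.trans (Finset.le_sup' _ (Finset.mem_univ a))
    · refine Finset.sup'_le _ _ fun a _ => ?_
      exact le_trans (le_abs_self _)
        (Finset.le_sup' (f := fun sa : S × A => |Qstar₂ sa.1 sa.2|) (Finset.mem_univ (s', a)))
  -- pointwise bound
  have key : ∀ sa : S × A, |Qstar₁ sa.1 sa.2 - Qstar₂ sa.1 sa.2| ≤ ε + g * Δ + M * D := by
    rintro ⟨s, a⟩
    have e₁ := congrFun (congrFun hfix₁ s) a
    have e₂ := congrFun (congrFun hfix₂ s) a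
    simp only [bellman] at e₁ e₂
    have expand : Qstar₁ s a - Qstar₂ s a = (R₁ s a - R₂ s a)
        + (∑ s' : S, ∑ τ ∈ Finset.Icc 1 τmax, p₁ s a s' τ * γ ^ τ * (V₁ s' - V₂ s'))
        + ∑ s' : S, ∑ τ ∈ Finset.Icc 1 τmax, (p₁ s a s' τ - p₂ s a s' τ) * γ ^ τ * V₂ s' := by
      rw [← e₁, ← e₂]
      have hsum : (∑ s' : S, ∑ τ ∈ Finset.Icc 1 τmax, p₁ s a s' τ * γ ^ τ * V₁ s')
          - (∑ s' : S, ∑ τ ∈ Finset.Icc 1 τmax, p₂ s a s' τ * γ ^ τ * V₂ s')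
          = (∑ s' : S, ∑ τ ∈ Finset.Icc 1 τmax, p₁ s a s' τ * γ ^ τ * (V₁ s' - V₂ s'))
          + ∑ s' : S, ∑ τ ∈ Finset.Icc 1 τmax, (p₁ s a s' τ - p₂ s a s' τ) * γ ^ τ * V₂ s' := by
        rw [← Finset.sum_sub_distrib, ← Finset.sum_add_distrib]
        refine Finset.sum_congr rfl fun s' _ => ?_
        rw [← Finset.sum_sub_distrib, ← Finset.sum_add_distrib]
        exact Finset.sum_congr rfl fun τ _ => by ring
      simp only [hV₁, hV₂] at hsum
      linarith [hsum]
    rw [expand]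
    have hA : |∑ s' : S, ∑ τ ∈ Finset.Icc 1 τmax, p₁ s a s' τ * γ ^ τ * (V₁ s' - V₂ s')|
        ≤ g * Δ := by
      calc |∑ s' : S, ∑ τ ∈ Finset.Icc 1 τmax, p₁ s a s' τ * γ ^ τ * (V₁ s' - V₂ s')|
          ≤ ∑ s' : S, ∑ τ ∈ Finset.Icc 1 τmax, |p₁ s a s' τ * γ ^ τ * (V₁ s' - V₂ s')| :=
            (Finset.abs_sum_le_sum_abs _ _).trans (Finset.sum_le_sum fun s' _ =>
              Finset.abs_sum_le_sum_abs _ _)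
        _ ≤ ∑ s' : S, ∑ τ ∈ Finset.Icc 1 τmax, p₁ s a s' τ * γ ^ τ * Δ := by
            refine Finset.sum_le_sum fun s' _ => Finset.sum_le_sum fun τ _ => ?_
            rw [abs_mul, abs_mul, abs_of_nonneg ((hp₁ s a).1 s' τ),
              abs_of_nonneg (pow_nonneg hγ0.le τ)]
            exact mul_le_mul_of_nonneg_left (hVd s')
              (mul_nonneg ((hp₁ s a).1 s' τ) (pow_nonneg hγ0.le τ))
        _ = (∑ s' : S, ∑ τ ∈ Finset.Icc 1 τmax, p₁ s a s' τ * γ ^ τ) * Δ := by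
            rw [Finset.sum_mul]
            exact Finset.sum_congr rfl fun s' _ => (Finset.sum_mul ..).symm
        _ ≤ g * Δ := by
            refine mul_le_mul_of_nonneg_right ?_ hΔ0
            rw [hgdef, effDiscount]
            exact Finset.le_sup'
              (f := fun sa : S × A => ∑ s' : S, ∑ τ ∈ Finset.Icc 1 τmax, p₁ sa.1 sa.2 s' τ * γ ^ τ)
              (Finset.mem_univ (s, a))
    have hB : |∑ s' : S, ∑ τ ∈ Finset.Icc 1 τmax, (p₁ s a s' τ - p₂ s a s' τ) * γ ^ τ * V₂ s'|
        ≤ M * D := by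
      calc |∑ s' : S, ∑ τ ∈ Finset.Icc 1 τmax, (p₁ s a s' τ - p₂ s a s' τ) * γ ^ τ * V₂ s'|
          ≤ ∑ s' : S, ∑ τ ∈ Finset.Icc 1 τmax, |(p₁ s a s' τ - p₂ s a s' τ) * γ ^ τ * V₂ s'| :=
            (Finset.abs_sum_le_sum_abs _ _).trans (Finset.sum_le_sum fun s' _ =>
              Finset.abs_sum_le_sum_abs _ _)
        _ ≤ ∑ s' : S, ∑ τ ∈ Finset.Icc 1 τmax, |p₁ s a s' τ - p₂ s a s' τ| * γ ^ τ * M := by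
            refine Finset.sum_le_sum fun s' _ => Finset.sum_le_sum fun τ _ => ?_
            rw [abs_mul, abs_mul, abs_of_nonneg (pow_nonneg hγ0.le τ)]
            exact mul_le_mul_of_nonneg_left (hV2 s')
              (mul_nonneg (abs_nonneg _) (pow_nonneg hγ0.le τ))
        _ = (∑ s' : S, ∑ τ ∈ Finset.Icc 1 τmax, |p₁ s a s' τ - p₂ s a s' τ| * γ ^ τ) * M := by
            rw [Finset.sum_mul]
            exact Finset.sum_congr rfl fun s' _ => (Finset.sum_mul ..).symm
        _ ≤ D * M := by
            refine mul_le_mul_of_nonneg_right ?_ hM0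
            rw [hDdef, kernelDiscrepancy]
            exact Finset.le_sup'
              (f := fun sa : S × A => ∑ s' : S, ∑ τ ∈ Finset.Icc 1 τmax,
                |p₁ sa.1 sa.2 s' τ - p₂ sa.1 sa.2 s' τ| * γ ^ τ)
              (Finset.mem_univ (s, a))
        _ = M * D := mul_comm _ _
    calc |(R₁ s a - R₂ s a) + _ + _|
        ≤ |R₁ s a - R₂ s a|
          + |∑ s' : S, ∑ τ ∈ Finset.Icc 1 τmax, p₁ s a s' τ * γ ^ τ * (V₁ s' - V₂ s')|
          + |∑ s' : S, ∑ τ ∈ Finset.Icc 1 τmax, (p₁ s a s' τ - p₂ s a s' τ) * γ ^ τ * V₂ s'| :=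
          (abs_add_le _ _).trans (add_le_add_left (abs_add_le _ _) _)
      _ ≤ ε + g * Δ + M * D := add_le_add (add_le_add (hε s a) hA) hB
  -- combine
  have hΔle : Δ ≤ ε + g * Δ + M * D := by
    rw [hΔdef, supNorm]
    exact Finset.sup'_le _ _ fun sa _ => key sa
  rw [le_div_iff₀ h1g]
  nlinarith [hΔle]
end

section
/- Strong monotonicity of the mean-path update under the random-discount covariance condition (linearized form of the paper's strong-monotonicity lemma): suppose the feature covariance Σ_μ is symmetric positive definite with smallest eigenvalue λ₀ > 0, and there exists ν ∈ (0,1) such that for every policy π : S → A and every v ∈ ℝ^d, vᵀ Σ_π v ≤ (1−ν)² vᵀ Σ_μ v, where Σ_π := Σ_{(s,a)} μ(s,a) Σ_{(s',τ)} p(s,a)(s',τ)·γ^{2τ}·g(s', π(s')) g(s', π(s'))ᵀ. Then for all θ, θ* ∈ ℝ^d, ⟨θ − θ*, h̄(θ) − h̄(θ*)⟩ ≥ ν λ₀ ‖θ − θ*‖². -/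
open Finset

/-- The mean-path update
`h̄(θ) = Σ_{(s,a)} μ(s,a) g(s,a) (⟨g(s,a),θ⟩ − R(s,a) − Σ_{(s',τ)} p(s,a)(s',τ) γ^τ max_{a'} ⟨g(s',a'),θ⟩)`. -/
noncomputable def meanPath {S A : Type*} [Fintype S] [Fintype A] [Nonempty A] {d : ℕ}
    (γ : ℝ) (τmax : ℕ) (p : S → A → S → ℕ → ℝ) (R : S → A → ℝ)
    (μ : S → A → ℝ) (g : S → A → EuclideanSpace ℝ (Fin d))
    (θ : EuclideanSpace ℝ (Fin d)) : EuclideanSpace ℝ (Fin d) :=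
  ∑ s : S, ∑ a : A,
    (μ s a * ((inner ℝ (g s a) θ : ℝ) - R s a -
        ∑ s' : S, ∑ τ ∈ Finset.Icc 1 τmax, p s a s' τ * γ ^ τ *
          Finset.univ.sup' Finset.univ_nonempty
            (fun a' : A => (inner ℝ (g s' a') θ : ℝ)))) • g s a

/-- strong monotonicity of the mean-path update under the
random-discount covariance condition: if the feature covariance has smallest
eigenvalue `lam0 > 0` and the worst-case next-state feature covariance under the
random discount `γ^{2τ}` is dominated by `(1 − ν)² Σ_μ` for every policy, then
`⟨θ − θ⋆, h̄(θ) − h̄(θ⋆)⟩ ≥ ν lam0 ‖θ − θ⋆‖²`. -/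
theorem strong_monotonicity {S A : Type*} [Fintype S] [Fintype A] [Nonempty S] [Nonempty A]
    {d : ℕ} (hd : 1 ≤ d)
    (γ : ℝ) (hγ0 : 0 < γ) (hγ1 : γ < 1) (τmax : ℕ) (hτmax : 1 ≤ τmax)
    (p : S → A → S → ℕ → ℝ)
    (hp : ∀ s a, (∀ s' τ, 0 ≤ p s a s' τ) ∧
      ∑ s' : S, ∑ τ ∈ Finset.Icc 1 τmax, p s a s' τ = 1)
    (R : S → A → ℝ)
    (μ : S → A → ℝ) (hμ0 : ∀ s a, 0 ≤ μ s a) (hμ1 : ∑ s : S, ∑ a : A, μ s a = 1)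
    (g : S → A → EuclideanSpace ℝ (Fin d))
    (lam0 : ℝ) (hlam0 : 0 < lam0)
    -- `Σ_μ` is positive definite with smallest eigenvalue `lam0`:
    (hPD : ∀ v : EuclideanSpace ℝ (Fin d),
      lam0 * ‖v‖ ^ 2 ≤ ∑ s : S, ∑ a : A, μ s a * (inner ℝ (g s a) v : ℝ) ^ 2)
    (ν : ℝ) (hν0 : 0 < ν) (hν1 : ν < 1)
    -- `vᵀ Σ_π v ≤ (1 − ν)² vᵀ Σ_μ v` for every policy `π` and every `v`:
    (hA6 : ∀ (π : S → A) (v : EuclideanSpace ℝ (Fin d)),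
      ∑ s : S, ∑ a : A, μ s a *
          ∑ s' : S, ∑ τ ∈ Finset.Icc 1 τmax,
            p s a s' τ * γ ^ (2 * τ) * (inner ℝ (g s' (π s')) v : ℝ) ^ 2
        ≤ (1 - ν) ^ 2 * ∑ s : S, ∑ a : A, μ s a * (inner ℝ (g s a) v : ℝ) ^ 2)
    (θ θstar : EuclideanSpace ℝ (Fin d)) :
    ν * lam0 * ‖θ - θstar‖ ^ 2
      ≤ (inner ℝ (θ - θstar)
          (meanPath γ τmax p R μ g θ - meanPath γ τmax p R μ g θstar) : ℝ) := by
  classical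
  set w : EuclideanSpace ℝ (Fin d) := θ - θstar with hw
  set F : S → A → ℝ := fun s a => (inner ℝ (g s a) w : ℝ) with hF
  set M : EuclideanSpace ℝ (Fin d) → S → ℝ := fun v s' =>
    Finset.univ.sup' Finset.univ_nonempty (fun a' : A => (inner ℝ (g s' a') v : ℝ)) with hM
  set D : S → ℝ := fun s' => M θ s' - M θstar s' with hD
  -- a policy capturing the max-difference
  have hπex : ∀ s' : S, ∃ a' : A, (D s') ^ 2 ≤ (inner ℝ (g s' a') w : ℝ) ^ 2 := by
    intro s'
    obtain ⟨a₁, -, h₁⟩ := Finset.exists_mem_eq_sup' (Finset.univ_nonempty)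
      (fun a' : A => (inner ℝ (g s' a') θ : ℝ))
    obtain ⟨a₂, -, h₂⟩ := Finset.exists_mem_eq_sup' (Finset.univ_nonempty)
      (fun a' : A => (inner ℝ (g s' a') θstar : ℝ))
    have hub : D s' ≤ (inner ℝ (g s' a₁) w : ℝ) := by
      have h2 : (inner ℝ (g s' a₁) θstar : ℝ) ≤ M θstar s' :=
        Finset.le_sup' (fun a' : A => (inner ℝ (g s' a') θstar : ℝ)) (Finset.mem_univ a₁)
      have hsub : (inner ℝ (g s' a₁) w : ℝ)
          = (inner ℝ (g s' a₁) θ : ℝ) - (inner ℝ (g s' a₁) θstar : ℝ) := by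
        simp [hw, inner_sub_right]
      have h1 : M θ s' = (inner ℝ (g s' a₁) θ : ℝ) := h₁
      simp only [hD]
      rw [h1, hsub]
      linarith
    have hlb : (inner ℝ (g s' a₂) w : ℝ) ≤ D s' := by
      have h2 : (inner ℝ (g s' a₂) θ : ℝ) ≤ M θ s' :=
        Finset.le_sup' (fun a' : A => (inner ℝ (g s' a') θ : ℝ)) (Finset.mem_univ a₂)
      have hsub : (inner ℝ (g s' a₂) w : ℝ)
          = (inner ℝ (g s' a₂) θ : ℝ) - (inner ℝ (g s' a₂) θstar : ℝ) := by
        simp [hw, inner_sub_right]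
      have h1 : M θstar s' = (inner ℝ (g s' a₂) θstar : ℝ) := h₂
      simp only [hD]
      rw [h1, hsub]
      linarith
    rcases le_or_gt 0 (D s') with h0 | h0
    · exact ⟨a₁, by nlinarith⟩
    · exact ⟨a₂, by nlinarith⟩
  set π : S → A := fun s' => (hπex s').choose with hπdef
  have hπ : ∀ s', (D s') ^ 2 ≤ (inner ℝ (g s' (π s')) w : ℝ) ^ 2 := fun s' => (hπex s').choose_spec
  set E : ℝ := ∑ s : S, ∑ a : A, μ s a * F s a ^ 2 with hE
  set X : S → A → ℝ := fun s a => ∑ s' : S, ∑ τ ∈ Finset.Icc 1 τmax,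
    p s a s' τ * γ ^ τ * D s' with hX
  set Cross : ℝ := ∑ s : S, ∑ a : A, μ s a * F s a * X s a with hCross
  -- key identity
  have key : (inner ℝ w (meanPath γ τmax p R μ g θ - meanPath γ τmax p R μ g θstar) : ℝ)
      = E - Cross := by
    simp only [meanPath, inner_sub_right, inner_sum, real_inner_smul_right]
    rw [hE, hCross, ← Finset.sum_sub_distrib, ← Finset.sum_sub_distrib]
    refine Finset.sum_congr rfl fun s _ => ?_
    rw [← Finset.sum_sub_distrib, ← Finset.sum_sub_distrib]
    refine Finset.sum_congr rfl fun a _ => ?_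
    have hgw : (inner ℝ w (g s a) : ℝ) = F s a := real_inner_comm _ _
    have hsub : (inner ℝ (g s a) θ : ℝ) - (inner ℝ (g s a) θstar : ℝ) = F s a := by
      simp [hF, hw, inner_sub_right]
    have hDsum : (∑ s' : S, ∑ τ ∈ Finset.Icc 1 τmax, p s a s' τ * γ ^ τ * M θ s')
        - (∑ s' : S, ∑ τ ∈ Finset.Icc 1 τmax, p s a s' τ * γ ^ τ * M θstar s')
        = X s a := by
      rw [hX, ← Finset.sum_sub_distrib]
      refine Finset.sum_congr rfl fun s' _ => ?_
      rw [← Finset.sum_sub_distrib]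
      refine Finset.sum_congr rfl fun τ _ => ?_
      simp only [hD]
      ring
    rw [hgw]
    linear_combination (μ s a * F s a) * hsub - (μ s a * F s a) * hDsum
  have hE0 : 0 ≤ E := by
    refine Finset.sum_nonneg fun s _ => Finset.sum_nonneg fun a _ => ?_
    exact mul_nonneg (hμ0 s a) (sq_nonneg _)
  -- bound on B
  set B : ℝ := ∑ s : S, ∑ a : A, μ s a * ∑ s' : S, ∑ τ ∈ Finset.Icc 1 τmax,
    p s a s' τ * γ ^ (2 * τ) * (D s') ^ 2 with hB
  have hB0 : 0 ≤ B := by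
    refine Finset.sum_nonneg fun s _ => Finset.sum_nonneg fun a _ => ?_
    refine mul_nonneg (hμ0 s a) (Finset.sum_nonneg fun s' _ => Finset.sum_nonneg fun τ _ => ?_)
    exact mul_nonneg (mul_nonneg ((hp s a).1 s' τ) (by positivity)) (sq_nonneg _)
  have hBle : B ≤ (1 - ν) ^ 2 * E := by
    have h1 : B ≤ ∑ s : S, ∑ a : A, μ s a * ∑ s' : S, ∑ τ ∈ Finset.Icc 1 τmax,
        p s a s' τ * γ ^ (2 * τ) * (inner ℝ (g s' (π s')) w : ℝ) ^ 2 := by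
      refine Finset.sum_le_sum fun s _ => Finset.sum_le_sum fun a _ => ?_
      refine mul_le_mul_of_nonneg_left ?_ (hμ0 s a)
      refine Finset.sum_le_sum fun s' _ => Finset.sum_le_sum fun τ _ => ?_
      exact mul_le_mul_of_nonneg_left (hπ s')
        (mul_nonneg ((hp s a).1 s' τ) (by positivity))
    calc B ≤ _ := h1
      _ ≤ (1 - ν) ^ 2 * ∑ s : S, ∑ a : A, μ s a * (inner ℝ (g s a) w : ℝ) ^ 2 := hA6 π w
      _ = (1 - ν) ^ 2 * E := by rw [hE]
  -- Cauchy-Schwarz on the flattened sum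
  have hCS : Cross ^ 2 ≤ E * B := by
    have e1 : (∑ x ∈ (Finset.univ : Finset (S × A)) ×ˢ
          ((Finset.univ : Finset S) ×ˢ Finset.Icc 1 τmax),
        (Real.sqrt (μ x.1.1 x.1.2 * p x.1.1 x.1.2 x.2.1 x.2.2) * F x.1.1 x.1.2) *
        (Real.sqrt (μ x.1.1 x.1.2 * p x.1.1 x.1.2 x.2.1 x.2.2) * (γ ^ x.2.2 * D x.2.1)))
        = Cross := by
      simp only [Finset.sum_product]
      rw [Fintype.sum_prod_type, hCross]
      refine Finset.sum_congr rfl fun s _ => Finset.sum_congr rfl fun a _ => ?_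
      rw [hX, Finset.mul_sum]
      refine Finset.sum_congr rfl fun s' _ => ?_
      rw [Finset.mul_sum]
      refine Finset.sum_congr rfl fun τ _ => ?_
      have hqq : Real.sqrt (μ s a * p s a s' τ) * Real.sqrt (μ s a * p s a s' τ)
          = μ s a * p s a s' τ :=
        Real.mul_self_sqrt (mul_nonneg (hμ0 s a) ((hp s a).1 s' τ))
      calc Real.sqrt (μ s a * p s a s' τ) * F s a *
            (Real.sqrt (μ s a * p s a s' τ) * (γ ^ τ * D s'))
          = Real.sqrt (μ s a * p s a s' τ) * Real.sqrt (μ s a * p s a s' τ) *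
            (F s a * (γ ^ τ * D s')) := by ring
        _ = μ s a * p s a s' τ * (F s a * (γ ^ τ * D s')) := by rw [hqq]
        _ = μ s a * F s a * (p s a s' τ * γ ^ τ * D s') := by ring
    have e2 : (∑ x ∈ (Finset.univ : Finset (S × A)) ×ˢ
          ((Finset.univ : Finset S) ×ˢ Finset.Icc 1 τmax),
        (Real.sqrt (μ x.1.1 x.1.2 * p x.1.1 x.1.2 x.2.1 x.2.2) * F x.1.1 x.1.2) ^ 2)
        = E := by
      simp only [Finset.sum_product]
      rw [Fintype.sum_prod_type, hE]
      refine Finset.sum_congr rfl fun s _ => Finset.sum_congr rfl fun a _ => ?_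
      have expand : ∀ s' τ, (Real.sqrt (μ s a * p s a s' τ) * F s a) ^ 2
          = μ s a * F s a ^ 2 * p s a s' τ := by
        intro s' τ
        rw [mul_pow, Real.sq_sqrt (mul_nonneg (hμ0 s a) ((hp s a).1 s' τ))]
        ring
      simp only [expand, ← Finset.mul_sum]
      rw [(hp s a).2, mul_one]
    have e3 : (∑ x ∈ (Finset.univ : Finset (S × A)) ×ˢ
          ((Finset.univ : Finset S) ×ˢ Finset.Icc 1 τmax),
        (Real.sqrt (μ x.1.1 x.1.2 * p x.1.1 x.1.2 x.2.1 x.2.2) *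
          (γ ^ x.2.2 * D x.2.1)) ^ 2)
        = B := by
      simp only [Finset.sum_product]
      rw [Fintype.sum_prod_type, hB]
      refine Finset.sum_congr rfl fun s _ => Finset.sum_congr rfl fun a _ => ?_
      have expand : ∀ s' τ, (Real.sqrt (μ s a * p s a s' τ) * (γ ^ τ * D s')) ^ 2
          = μ s a * (p s a s' τ * γ ^ (2 * τ) * D s' ^ 2) := by
        intro s' τ
        rw [mul_pow, Real.sq_sqrt (mul_nonneg (hμ0 s a) ((hp s a).1 s' τ)),
          mul_pow, ← pow_mul, mul_comm τ 2]
        ring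
      simp only [expand, Finset.mul_sum]
    rw [← e1, ← e2, ← e3]
    exact Finset.sum_mul_sq_le_sq_mul_sq _ _ _
  have hCrossle : Cross ≤ (1 - ν) * E := by
    have hK0 : 0 ≤ (1 - ν) * E := mul_nonneg (by linarith) hE0
    have hsq : Cross ^ 2 ≤ ((1 - ν) * E) ^ 2 := by
      calc Cross ^ 2 ≤ E * B := hCS
        _ ≤ E * ((1 - ν) ^ 2 * E) := mul_le_mul_of_nonneg_left hBle hE0
        _ = ((1 - ν) * E) ^ 2 := by ring
    nlinarith
  have hEge : lam0 * ‖w‖ ^ 2 ≤ E := by rw [hE]; exact hPD w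
  rw [key]
  have h1 : ν * (lam0 * ‖w‖ ^ 2) ≤ ν * E := mul_le_mul_of_nonneg_left hEge hν0.le
  linarith
end
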